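/- Fix λ > 0 and for φ > 0 let v(φ) = (√((φ+λ-1)²+4λ) - (φ+λ-1))/(2λ). Then the function g(φ) = (1-φ)·v(φ)² + 2·v(φ) + 1 is strictly decreasing in φ on (0,∞), and consequently the bias α²/g(φ) of ridge regression with isotropic features is strictly increasing in φ for any α² > 0. -/

import Mathlib

/-- The fixed-point solution for isotropic features. -/
noncomputable def vIso (lam φ : ℝ) : ℝ :=
  (Real.sqrt ((φ + lam - 1) ^ 2 + 4 * lam) - (φ + lam - 1)) / (2 * lam)

lemma vIso_pos (lam φ : ℝ) (hlam : 0 < lam) : 0 < vIso lam φ := by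
  have hb : |φ + lam - 1| < Real.sqrt ((φ + lam - 1) ^ 2 + 4 * lam) := by
    have := Real.sqrt_lt_sqrt (by positivity : (0:ℝ) ≤ (φ + lam - 1) ^ 2)
      (by linarith : (φ + lam - 1) ^ 2 < (φ + lam - 1) ^ 2 + 4 * lam)
    rwa [Real.sqrt_sq_eq_abs] at this
  have h : φ + lam - 1 < Real.sqrt ((φ + lam - 1) ^ 2 + 4 * lam) :=
    lt_of_le_of_lt (le_abs_self _) hb
  exact div_pos (by linarith) (by linarith)

lemma vIso_eq (lam φ : ℝ) (hlam : 0 < lam) :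
    lam * (vIso lam φ) ^ 2 + (φ + lam - 1) * vIso lam φ - 1 = 0 := by
  have hs : Real.sqrt ((φ + lam - 1) ^ 2 + 4 * lam) ^ 2
      = (φ + lam - 1) ^ 2 + 4 * lam := Real.sq_sqrt (by positivity)
  unfold vIso
  field_simp
  rw [show lam * 4 = 4 * lam by ring]
  nlinarith [hs]

lemma vIso_anti (lam : ℝ) (hlam : 0 < lam) {a b : ℝ} (ha : 0 < a) (hab : a < b) :
    vIso lam b < vIso lam a := by
  have h1 := vIso_eq lam a hlam
  have h2 := vIso_eq lam b hlam
  have p1 := vIso_pos lam a hlam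
  have p2 := vIso_pos lam b hlam
  set v1 := vIso lam a
  set v2 := vIso lam b
  by_contra h
  push_neg at h
  nlinarith [mul_nonneg (sub_nonneg.2 h) (le_of_lt p1),
    mul_pos (sub_pos.2 hab) p2,
    mul_nonneg (mul_nonneg (sub_nonneg.2 h) (le_of_lt p1)) (le_of_lt p2),
    mul_nonneg (sub_nonneg.2 h) (mul_pos p1 p2).le]

/-- For fixed `λ > 0`, `g(φ) = (1-φ) v(φ)² + 2 v(φ) + 1` is strictly
decreasing in `φ` on `(0,∞)`, so the bias `α²/g(φ)` of isotropic ridge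
regression is strictly increasing in `φ`. -/
theorem isotropic_bias_monotone (lam α2 : ℝ) (hlam : 0 < lam) (hα : 0 < α2) :
    StrictAntiOn
      (fun φ : ℝ => (1 - φ) * (vIso lam φ) ^ 2 + 2 * vIso lam φ + 1)
      (Set.Ioi 0) ∧
    StrictMonoOn
      (fun φ : ℝ => α2 / ((1 - φ) * (vIso lam φ) ^ 2 + 2 * vIso lam φ + 1))
      (Set.Ioi 0) := by
  have hg : ∀ φ : ℝ, (1 - φ) * (vIso lam φ) ^ 2 + 2 * vIso lam φ + 1
      = (vIso lam φ + 1) * (lam * (vIso lam φ) ^ 2 + 1) := by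
    intro φ
    have h := vIso_eq lam φ hlam
    linear_combination (-(vIso lam φ)) * h
  have hanti : StrictAntiOn
      (fun φ : ℝ => (1 - φ) * (vIso lam φ) ^ 2 + 2 * vIso lam φ + 1)
      (Set.Ioi 0) := by
    intro a ha b hb hab
    simp only
    rw [hg a, hg b]
    have hv := vIso_anti lam hlam (Set.mem_Ioi.mp ha) hab
    have p1 := vIso_pos lam a hlam
    have p2 := vIso_pos lam b hlam
    have h3 : 0 < (vIso lam a - vIso lam b) * ((vIso lam a)^2 + vIso lam a * vIso lam b + (vIso lam b)^2) := by
      apply mul_pos (by linarith)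
      nlinarith [mul_pos p1 p2, sq_nonneg (vIso lam a), sq_nonneg (vIso lam b)]
    have h2 : 0 < (vIso lam a - vIso lam b) * (vIso lam a + vIso lam b) := by
      apply mul_pos (by linarith) (by linarith)
    nlinarith [mul_pos hlam h3, mul_pos hlam h2]
  refine ⟨hanti, ?_⟩
  intro a ha b hb hab
  have hpos : ∀ φ : ℝ, 0 < (1 - φ) * (vIso lam φ) ^ 2 + 2 * vIso lam φ + 1 := by
    intro φ
    rw [hg φ]
    have := vIso_pos lam φ hlam
    positivity
  simp only
  exact div_lt_div_of_pos_left hα (hpos b) (hanti ha hb hab)
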